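/- If X_1, ..., X_n are jointly distributed {-1,+1}-valued random variables with n ≥ 1, then s_odd(E[X_1 X_2], E[X_2 X_3], ..., E[X_{n-1} X_n], E[X_n X_1]) ≤ n - 2 for n ≥ 3; equivalently, for every choice of signs ε_i ∈ {-1,+1} with an odd number of -1's, Σ_{i=1}^n ε_i E[X_i X_{i⊕1}] ≤ n - 2, where ⊕ denotes cyclic successor on {1,...,n}. -/

import Mathlib

open Finset

/-- Number of minus signs in a sign vector (encoded as a Boolean vector,
`true` meaning the sign `-1`). -/
def negCount {ι : Type*} [Fintype ι] [DecidableEq ι] (ε : ι → Bool) : ℕ :=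
  (Finset.univ.filter (fun i => ε i = true)).card

/-- The signed sum `Σ ε_i a_i` corresponding to a sign vector. -/
def sgnSum {ι : Type*} [Fintype ι] (a : ι → ℝ) (ε : ι → Bool) : ℝ :=
  ∑ i, (if ε i then -(a i) else a i)

/-- Sign vectors with an even number of `-1`'s. -/
def evenSigns (ι : Type*) [Fintype ι] [DecidableEq ι] : Finset (ι → Bool) :=
  Finset.univ.filter (fun ε => Even (negCount ε))

/-- Sign vectors with an odd number of `-1`'s. -/
def oddSigns (ι : Type*) [Fintype ι] [DecidableEq ι] : Finset (ι → Bool) :=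
  Finset.univ.filter (fun ε => Odd (negCount ε))

lemma evenSigns_nonempty (ι : Type*) [Fintype ι] [DecidableEq ι] :
    (evenSigns ι).Nonempty :=
  ⟨fun _ => false, Finset.mem_filter.mpr ⟨Finset.mem_univ _, by simp [negCount]⟩⟩

lemma oddSigns_nonempty (ι : Type*) [Fintype ι] [DecidableEq ι] [Nonempty ι] :
    (oddSigns ι).Nonempty := by
  refine ⟨fun i => decide (i = Classical.arbitrary ι), ?_⟩
  exact Finset.mem_filter.mpr ⟨Finset.mem_univ _, by simp [negCount, Finset.filter_eq']⟩

/-- `s_even`: maximum of signed sums over sign vectors with evenly many minuses. -/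
noncomputable def sEven {ι : Type*} [Fintype ι] [DecidableEq ι] (a : ι → ℝ) : ℝ :=
  (evenSigns ι).sup' (evenSigns_nonempty ι) (sgnSum a)

/-- `s_odd`: maximum of signed sums over sign vectors with oddly many minuses. -/
noncomputable def sOdd {ι : Type*} [Fintype ι] [DecidableEq ι] [Nonempty ι] (a : ι → ℝ) : ℝ :=
  (oddSigns ι).sup' (oddSigns_nonempty ι) (sgnSum a)

open MeasureTheory

lemma sum_le_of_prod_neg {n : ℕ} [NeZero n] (f : Fin n → ℝ)
    (hf : ∀ i, f i = 1 ∨ f i = -1) (hprod : ∏ i, f i = -1) :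
    ∑ i, f i ≤ (n : ℝ) - 2 := by
  have hj : ∃ j, f j = -1 := by
    by_contra h
    push_neg at h
    have : ∀ i, f i = 1 := fun i => (hf i).resolve_right (h i)
    simp [this] at hprod
    linarith
  obtain ⟨j, hj⟩ := hj
  have hsum : ∑ i, f i = ∑ i ∈ Finset.univ.erase j, f i + f j :=
    (Finset.sum_erase_add _ _ (Finset.mem_univ j)).symm
  have hcard : (Finset.univ.erase j).card = n - 1 := by
    simp [Finset.card_erase_of_mem]
  have hb : ∑ i ∈ Finset.univ.erase j, f i ≤ (n : ℝ) - 1 := by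
    calc ∑ i ∈ Finset.univ.erase j, f i ≤ ∑ _i ∈ Finset.univ.erase j, (1 : ℝ) := by
          apply Finset.sum_le_sum
          intro i _
          rcases hf i with h | h <;> simp [h]
      _ = ((n : ℝ) - 1) := by
          rw [Finset.sum_const, hcard]
          have hn1 : 1 ≤ n := Nat.one_le_iff_ne_zero.mpr (NeZero.ne n)
          simp [Nat.cast_sub hn1]
  rw [hsum, hj]
  linarith

/-- The classical cyclic bound: for `n ≥ 3` jointly distributed `±1`-valued random
variables, `s_odd` of the cyclic correlations is at most `n - 2`. -/
theorem cyclic_sOdd_bound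
    (n : ℕ) [NeZero n] (hn : 3 ≤ n)
    {Ω : Type*} [MeasurableSpace Ω] (μ : Measure Ω) [IsProbabilityMeasure μ]
    (X : Fin n → Ω → ℝ)
    (hpm : ∀ i ω, X i ω = 1 ∨ X i ω = -1)
    (hm : ∀ i, Measurable (X i)) :
    sOdd (fun i : Fin n => ∫ ω, X i ω * X (i + 1) ω ∂μ) ≤ (n : ℝ) - 2 := by
  apply Finset.sup'_le
  intro ε hε
  have hodd : Odd (negCount ε) := by simpa [oddSigns] using hε
  set g : Fin n → Ω → ℝ := fun i ω => X i ω * X (i + 1) ω with hg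
  have hpm2 : ∀ i ω, g i ω = 1 ∨ g i ω = -1 := by
    intro i ω
    rcases hpm i ω with h1 | h1 <;> rcases hpm (i + 1) ω with h2 | h2 <;>
      simp [hg, h1, h2]
  have hint : ∀ i, Integrable (g i) μ := by
    intro i
    apply Integrable.mono' (integrable_const (1 : ℝ))
      (((hm i).mul (hm (i + 1))).aestronglyMeasurable)
    filter_upwards with ω
    rcases hpm i ω with h1 | h1 <;> rcases hpm (i + 1) ω with h2 | h2 <;>
      simp [hg, h1, h2]
  have hint2 : ∀ i, Integrable (fun ω => if ε i then -(g i ω) else g i ω) μ := by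
    intro i
    by_cases h : ε i
    · refine ((hint i).neg).congr (Filter.EventuallyEq.of_eq (funext fun ω => ?_))
      simp [h]
    · simpa [h] using hint i
  have hrw : sgnSum (fun i : Fin n => ∫ ω, X i ω * X (i + 1) ω ∂μ) ε
      = ∫ ω, ∑ i, (if ε i then -(g i ω) else g i ω) ∂μ := by
    rw [MeasureTheory.integral_finset_sum _ (fun i _ => hint2 i)]
    unfold sgnSum
    apply Finset.sum_congr rfl
    intro i _
    by_cases h : ε i <;> simp [h, hg, integral_neg]
  rw [hrw]
  have hbound : ∀ ω, ∑ i, (if ε i then -(g i ω) else g i ω) ≤ (n : ℝ) - 2 := by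
    intro ω
    apply sum_le_of_prod_neg
    · intro i
      rcases hpm2 i ω with h | h <;> by_cases he : ε i <;> simp [h, he]
    · have hfac : ∀ i, (if ε i then -(g i ω) else g i ω)
          = (if ε i then (-1 : ℝ) else 1) * g i ω := by
        intro i; by_cases h : ε i <;> simp [h]
      calc ∏ i, (if ε i then -(g i ω) else g i ω)
          = (∏ i, (if ε i then (-1 : ℝ) else 1)) * ∏ i, g i ω := by
            rw [← Finset.prod_mul_distrib]
            exact Finset.prod_congr rfl fun i _ => hfac i
        _ = (-1 : ℝ) ^ (negCount ε) * ∏ i, g i ω := by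
            congr 1
            rw [Finset.prod_ite, Finset.prod_const, Finset.prod_const]
            simp [negCount]
        _ = -1 := by
            have h1 : ∏ i, g i ω = (∏ i, X i ω) ^ 2 := by
              rw [hg]
              rw [Finset.prod_mul_distrib, sq]
              congr 1
              exact Fintype.prod_equiv (Equiv.addRight (1 : Fin n)) _ _ (fun i => rfl)
            have h2 : (∏ i, X i ω) ^ 2 = 1 := by
              rw [← Finset.prod_pow]
              apply Finset.prod_eq_one
              intro i _
              rcases hpm i ω with h | h <;> simp [h]
            rw [h1, h2, hodd.neg_one_pow]
            ring
  calc ∫ ω, ∑ i, (if ε i then -(g i ω) else g i ω) ∂μ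
      ≤ ∫ _ω, ((n : ℝ) - 2) ∂μ := by
        apply integral_mono (integrable_finset_sum _ (fun i _ => hint2 i))
          (integrable_const _)
        exact hbound
    _ = (n : ℝ) - 2 := by simp
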